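/- Let μ be a measure on ℝ³, let Ω ⊆ ℝ³ be a measurable set, let C be a finite set, let A ⊆ ℝ³ be nonempty and let (B_s)_{s∈C} be nonempty measurable subsets of ℝ³, let m ∈ ℝ³, and let d > 0, η₂ > 0, κ > 0, C_bb > 0, C_bp > 0 be real numbers with κ · d > 1, and C_ov a natural number. Assume (i) dist(x, m) ≤ d/2 for all x ∈ A, (ii) for every s ∈ C: the diameter of B_s is at most d, d² ≤ C_bb · μ(B_s ∩ Ω), and there exist x ∈ A, y ∈ B_s with ‖x − y‖ < κ · d² / η₂, (iii) for every x ∈ Ω, the number of s ∈ C with x ∈ B_s is at most C_ov, and (iv) μ(closedBall(x, r) ∩ Ω) ≤ C_bp · r² for all x ∈ ℝ³ and r ≥ 0. Then #C ≤ C_bb · C_ov · C_bp · (3/2 + 1/η₂)² · κ² · d². -/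

import Mathlib

open MeasureTheory

/-- High-frequency conclusion of Lemma 5.1 (Sparsity): in the regime `κ d > 1`,
the set `C` of clusters whose bounding boxes (common diameter `d`) violate the
parabolic admissibility condition with respect to a box `A` with midpoint `m`
and diameter `d` has cardinality at most
`C_bb C_ov C_bp (3/2 + 1/η₂)² κ² d²`. -/
theorem sparsity_highfreq {ι : Type*} (μ : Measure (EuclideanSpace ℝ (Fin 3)))
    (Ω : Set (EuclideanSpace ℝ (Fin 3))) (hΩ : MeasurableSet Ω)
    (C : Finset ι) (A : Set (EuclideanSpace ℝ (Fin 3))) (hA : A.Nonempty)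
    (B : ι → Set (EuclideanSpace ℝ (Fin 3)))
    (hBne : ∀ s ∈ C, (B s).Nonempty) (hBmeas : ∀ s ∈ C, MeasurableSet (B s))
    (m : EuclideanSpace ℝ (Fin 3))
    (d η₂ κ C_bb C_bp : ℝ) (hd : 0 < d) (hη : 0 < η₂) (hκ : 0 < κ) (hκd : 1 < κ * d)
    (hCbb : 0 < C_bb) (hCbp : 0 < C_bp) (C_ov : ℕ)
    (hmid : ∀ x ∈ A, dist x m ≤ d / 2)
    (hdiam : ∀ s ∈ C, ∀ z ∈ B s, ∀ z' ∈ B s, dist z z' ≤ d)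
    (hcurv : ∀ s ∈ C, ENNReal.ofReal (d ^ 2) ≤ ENNReal.ofReal C_bb * μ (B s ∩ Ω))
    (hnear : ∀ s ∈ C, ∃ x ∈ A, ∃ y ∈ B s, ‖x - y‖ < κ * d ^ 2 / η₂)
    (hov : ∀ x ∈ Ω, ({s | s ∈ C ∧ x ∈ B s}).ncard ≤ C_ov)
    (hball : ∀ (x : EuclideanSpace ℝ (Fin 3)) (r : ℝ), 0 ≤ r →
      μ (Metric.closedBall x r ∩ Ω) ≤ ENNReal.ofReal (C_bp * r ^ 2)) :
    (C.card : ℝ) ≤ C_bb * C_ov * C_bp * (3 / 2 + 1 / η₂) ^ 2 * κ ^ 2 * d ^ 2 := by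
  classical
  set R : ℝ := (3 / 2 + 1 / η₂) * (κ * d ^ 2) with hR
  have hd2 : (0 : ℝ) < d ^ 2 := by positivity
  have hRpos : 0 < R := by positivity
  have hdle : d ≤ κ * d ^ 2 := by nlinarith
  have hsub : ∀ s ∈ C, B s ∩ Ω ⊆ Metric.closedBall m R ∩ Ω := by
    intro s hs z hz
    obtain ⟨x, hx, y, hy, hxy⟩ := hnear s hs
    refine ⟨?_, hz.2⟩
    have h1 : dist z y ≤ d := hdiam s hs z hz.1 y hy
    have h2 : dist y x ≤ κ * d ^ 2 / η₂ := by
      rw [dist_comm, dist_eq_norm]; exact le_of_lt hxy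
    have h3 : dist x m ≤ d / 2 := hmid x hx
    have h4 : dist z m ≤ dist z y + dist y x + dist x m := dist_triangle4 z y x m
    have hRe : R = 3 / 2 * (κ * d ^ 2) + κ * d ^ 2 / η₂ := by rw [hR]; ring
    have : dist z m ≤ R := by rw [hRe]; linarith
    simpa [Metric.mem_closedBall] using this
  have hovsum : ∀ x, ∑ s ∈ C, (B s ∩ Ω).indicator (1 : EuclideanSpace ℝ (Fin 3) → ENNReal) x
      ≤ (C_ov : ENNReal) * (Metric.closedBall m R ∩ Ω).indicator 1 x := by
    intro x
    by_cases hx : x ∈ Metric.closedBall m R ∩ Ω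
    · rw [Set.indicator_of_mem hx]
      simp only [Pi.one_apply, mul_one]
      have hxΩ : x ∈ Ω := hx.2
      calc ∑ s ∈ C, (B s ∩ Ω).indicator (1 : EuclideanSpace ℝ (Fin 3) → ENNReal) x
          = ((C.filter (fun s => x ∈ B s)).card : ENNReal) := by
            rw [Finset.card_filter]
            push_cast
            refine Finset.sum_congr rfl fun s hs => ?_
            by_cases h : x ∈ B s <;> simp [Set.indicator, h, hxΩ]
        _ ≤ (C_ov : ENNReal) := by
            have hset : ({s | s ∈ C ∧ x ∈ B s} : Set ι) = ↑(C.filter (fun s => x ∈ B s)) := by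
              ext s; simp [Finset.mem_filter]
            have h := hov x hxΩ
            rw [hset, Set.ncard_coe_finset] at h
            exact_mod_cast h
    · rw [Set.indicator_of_notMem hx, mul_zero]
      refine le_of_eq (Finset.sum_eq_zero fun s hs => ?_)
      exact Set.indicator_of_notMem (fun h => hx (hsub s hs h)) _
  have hsum : ∑ s ∈ C, μ (B s ∩ Ω) ≤ (C_ov : ENNReal) * ENNReal.ofReal (C_bp * R ^ 2) := by
    have h1 : ∑ s ∈ C, μ (B s ∩ Ω)
        = ∫⁻ x, ∑ s ∈ C, (B s ∩ Ω).indicator (1 : EuclideanSpace ℝ (Fin 3) → ENNReal) x ∂μ := by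
      rw [lintegral_finset_sum _ (fun s hs =>
        measurable_one.indicator ((hBmeas s hs).inter hΩ))]
      refine Finset.sum_congr rfl fun s hs => ?_
      rw [lintegral_indicator ((hBmeas s hs).inter hΩ) _]
      simp
    rw [h1]
    calc ∫⁻ x, ∑ s ∈ C, (B s ∩ Ω).indicator (1 : EuclideanSpace ℝ (Fin 3) → ENNReal) x ∂μ
        ≤ ∫⁻ x, (C_ov : ENNReal) * (Metric.closedBall m R ∩ Ω).indicator 1 x ∂μ :=
          lintegral_mono hovsum
      _ = (C_ov : ENNReal) * μ (Metric.closedBall m R ∩ Ω) := by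
          rw [lintegral_const_mul _ (measurable_one.indicator
            (measurableSet_closedBall.inter hΩ)),
            lintegral_indicator (measurableSet_closedBall.inter hΩ) _]
          simp
      _ ≤ _ := mul_le_mul_right (hball m R hRpos.le) _
  have hmain : ENNReal.ofReal ((C.card : ℝ) * d ^ 2)
      ≤ ENNReal.ofReal (C_bb * (C_ov * (C_bp * R ^ 2))) := by
    have e1 : ENNReal.ofReal ((C.card : ℝ) * d ^ 2)
        = (C.card : ENNReal) * ENNReal.ofReal (d ^ 2) := by
      rw [ENNReal.ofReal_mul (by positivity)]
      congr 1
      exact ENNReal.ofReal_natCast _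
    have e2 : ENNReal.ofReal (C_bb * (C_ov * (C_bp * R ^ 2)))
        = ENNReal.ofReal C_bb * ((C_ov : ENNReal) * ENNReal.ofReal (C_bp * R ^ 2)) := by
      rw [ENNReal.ofReal_mul hCbb.le, ENNReal.ofReal_mul (by positivity)]
      congr 2
      exact ENNReal.ofReal_natCast _
    rw [e1, e2]
    calc (C.card : ENNReal) * ENNReal.ofReal (d ^ 2)
        = ∑ _s ∈ C, ENNReal.ofReal (d ^ 2) := by rw [Finset.sum_const, nsmul_eq_mul]
      _ ≤ ∑ s ∈ C, ENNReal.ofReal C_bb * μ (B s ∩ Ω) := Finset.sum_le_sum hcurv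
      _ = ENNReal.ofReal C_bb * ∑ s ∈ C, μ (B s ∩ Ω) := (Finset.mul_sum _ _ _).symm
      _ ≤ _ := mul_le_mul_right hsum _
  have hreal : (C.card : ℝ) * d ^ 2 ≤ C_bb * (C_ov * (C_bp * R ^ 2)) :=
    (ENNReal.ofReal_le_ofReal_iff (by positivity)).mp hmain
  rw [← mul_le_mul_iff_of_pos_right hd2]
  calc (C.card : ℝ) * d ^ 2 ≤ C_bb * (C_ov * (C_bp * R ^ 2)) := hreal
    _ = C_bb * C_ov * C_bp * (3 / 2 + 1 / η₂) ^ 2 * κ ^ 2 * d ^ 2 * d ^ 2 := by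
        rw [hR]; ring
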